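/- Let B ∈ ℝ³ with b = |B| > 0 and let h > 0 satisfy hb < π. Let P₀, P₁, P₋₁ ∈ ℂ^{3×3} be the orthogonal projections onto the eigenspaces of the complexified matrix B̂ for the eigenvalues 0, −ib, +ib. Then: (i) P₀ · (2/h)tanh(−(h/2)B̂) = 0; (ii) P_{±1} · (2/h)tanh(−(h/2)B̂) = ±i (2/h) tan(hb/2) P_{±1}; (iii) P₀ · Ψ(−hB̂) = P₀ and P_{±1} · Ψ(−hB̂) = Ψ(±ihb) P_{±1}, where Ψ(ζ) = tanch(ζ/2) with tanch(ζ) = tanh(ζ)/ζ extended by 1 at ζ = 0, and where matrix functions are defined by the power series. -/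

import Mathlib

noncomputable section

attribute [local instance] Matrix.normedAddCommGroup Matrix.normedSpace

open Real (pi)

/-- The complexified skew-symmetric matrix `B̂` associated with `B ∈ ℝ³`. -/
def hatC (B : Fin 3 → ℝ) : Matrix (Fin 3) (Fin 3) ℂ :=
  !![0, -B 2, B 1; B 2, 0, -B 0; -B 1, B 0, 0]

/-- The Euclidean norm of a vector in `ℝ³`. -/
def enorm3 (B : Fin 3 → ℝ) : ℝ := Real.sqrt (B 0 ^ 2 + B 1 ^ 2 + B 2 ^ 2)

/-- The Taylor coefficients of `tanh` at `0`. -/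
def tanhCoeff (n : ℕ) : ℝ := iteratedDeriv n Real.tanh 0 / n.factorial

/-- `tanh` of a complex matrix, defined by the power series of `tanh` at `0`. -/
def tanhMatC (A : Matrix (Fin 3) (Fin 3) ℂ) : Matrix (Fin 3) (Fin 3) ℂ :=
  ∑' n : ℕ, (tanhCoeff n : ℂ) • A ^ n

/-- The Taylor coefficients at `0` of the filter function `Ψ(ζ) = tanch(ζ/2)`,
where `tanch(ζ) = tanh(ζ)/ζ` extended by `1` at `0`. -/
def PsiCoeff (n : ℕ) : ℝ := tanhCoeff (n + 1) / 2 ^ n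

/-- The filter function `Ψ(ζ) = tanch(ζ/2)` of a complex matrix, via its power series. -/
def PsiMatC (A : Matrix (Fin 3) (Fin 3) ℂ) : Matrix (Fin 3) (Fin 3) ℂ :=
  ∑' n : ℕ, (PsiCoeff n : ℂ) • A ^ n

/-- The scalar function `Ψ(ζ) = tanch(ζ/2)`, via its power series. -/
def PsiFun (z : ℂ) : ℂ := ∑' n : ℕ, (PsiCoeff n : ℂ) * z ^ n

namespace Stmt6Aux

open Complex

open Complex

lemma cosh_ne_zero_of_norm_lt {z : ℂ} (hz : ‖z‖ < pi / 2) : Complex.cosh z ≠ 0 := by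
  intro h0
  rw [← Complex.cos_mul_I] at h0
  obtain ⟨k, hk⟩ := Complex.cos_eq_zero_iff.mp h0
  have hodd : (2 * k + 1 : ℤ) ≠ 0 := by omega
  have h1 : (1 : ℝ) ≤ |(2 * (k : ℝ) + 1)| := by
    have := Int.one_le_abs hodd
    calc (1:ℝ) ≤ |(2*k+1 : ℤ)| := by exact_mod_cast this
    _ = |(2 * (k : ℝ) + 1)| := by push_cast; ring_nf
  have hnorm : ‖z * I‖ = |(2 * (k : ℝ) + 1)| * (pi / 2) := by
    rw [hk]
    have : ((2 * (k:ℂ) + 1) * (pi:ℂ) / 2) = (((2 * (k:ℝ) + 1) * pi / 2 : ℝ) : ℂ) := by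
      push_cast; ring
    rw [this, Complex.norm_real, Real.norm_eq_abs, abs_div, abs_mul]
    rw [abs_of_pos Real.pi_pos, abs_of_pos (by norm_num : (0:ℝ) < 2)]
    ring
  rw [norm_mul, Complex.norm_I, mul_one] at hnorm
  have : pi / 2 ≤ ‖z‖ := by
    rw [hnorm]
    nlinarith [Real.pi_pos]
  linarith

lemma tanh_eq_div : Complex.tanh = fun z => Complex.sinh z / Complex.cosh z :=
  funext fun z => Complex.tanh_eq_sinh_div_cosh z

lemma tanh_diffOn : DifferentiableOn ℂ Complex.tanh (Metric.ball 0 (pi / 2)) := by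
  rw [tanh_eq_div]
  intro z hz
  have hc : Complex.cosh z ≠ 0 :=
    cosh_ne_zero_of_norm_lt (by simpa [Metric.mem_ball, dist_zero_right] using hz)
  exact (Complex.differentiable_sinh.differentiableAt.div
    Complex.differentiable_cosh.differentiableAt hc).differentiableWithinAt

def U : Set ℂ := {z | Complex.cosh z ≠ 0}

lemma isOpen_U : IsOpen U :=
  Complex.continuous_cosh.isOpen_preimage {0}ᶜ isOpen_compl_singleton

lemma real_mem_U (x : ℝ) : (x : ℂ) ∈ U := by
  simp only [U, Set.mem_setOf_eq, ← Complex.ofReal_cosh]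
  exact_mod_cast (Real.cosh_pos x).ne'

lemma analyticOnNhd_tanh : AnalyticOnNhd ℂ Complex.tanh U := by
  rw [tanh_eq_div]
  intro z hz
  exact (Complex.differentiable_sinh.analyticAt z).div
    (Complex.differentiable_cosh.analyticAt z) hz

lemma analyticOnNhd_iteratedDeriv_tanh (n : ℕ) :
    AnalyticOnNhd ℂ (iteratedDeriv n Complex.tanh) U := by
  induction n with
  | zero => simpa [iteratedDeriv_zero] using analyticOnNhd_tanh
  | succ n ih => simpa [iteratedDeriv_succ] using ih.deriv_of_isOpen isOpen_U

lemma iteratedDeriv_tanh_real (n : ℕ) (x : ℝ) :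
    iteratedDeriv n Complex.tanh x = ((iteratedDeriv n Real.tanh x : ℝ) : ℂ) := by
  induction n generalizing x with
  | zero => simp [iteratedDeriv_zero, Complex.ofReal_tanh]
  | succ n ih =>
    have hdiff : DifferentiableAt ℂ (iteratedDeriv n Complex.tanh) (x : ℂ) :=
      ((analyticOnNhd_iteratedDeriv_tanh n) _ (real_mem_U x)).differentiableAt
    set d : ℂ := deriv (iteratedDeriv n Complex.tanh) (x : ℂ) with hd
    have hD : HasDerivAt (iteratedDeriv n Complex.tanh) d (x : ℂ) := hdiff.hasDerivAt
    have hDr : HasDerivAt (fun y : ℝ => iteratedDeriv n Complex.tanh (y : ℂ)) d x :=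
      hD.comp_ofReal
    have hfun : (fun y : ℝ => iteratedDeriv n Complex.tanh (y : ℂ)) =
        fun y : ℝ => ((iteratedDeriv n Real.tanh y : ℝ) : ℂ) := funext fun y => ih y
    rw [hfun] at hDr
    have hre : HasDerivAt (fun y : ℝ => iteratedDeriv n Real.tanh y) d.re x := by
      have := Complex.reCLM.hasFDerivAt.comp_hasDerivAt x hDr
      simpa [Function.comp_def] using this
    have him : HasDerivAt (fun _ : ℝ => (0 : ℝ)) d.im x := by
      have h2 := Complex.imCLM.hasFDerivAt.comp_hasDerivAt x hDr
      simp only [Function.comp_def, Complex.imCLM_apply, Complex.ofReal_im] at h2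
      exact h2
    have hdim : d.im = 0 := ((hasDerivAt_const x (0 : ℝ)).unique him).symm
    have : iteratedDeriv (n + 1) Complex.tanh (x : ℂ) = d := by
      rw [iteratedDeriv_succ, hd]
    rw [this, iteratedDeriv_succ]
    rw [hre.deriv]
    exact (Complex.ext (by simp) (by simp [hdim])).symm

lemma hasSum_tanh {z : ℂ} (hz : ‖z‖ < pi / 2) :
    HasSum (fun n : ℕ => (tanhCoeff n : ℂ) * z ^ n) (Complex.tanh z) := by
  have hmem : z ∈ Metric.ball (0 : ℂ) (pi / 2) := by
    simpa [Metric.mem_ball, dist_zero_right] using hz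
  have H := Complex.hasSum_taylorSeries_on_ball tanh_diffOn hmem
  convert H using 1
  · rfl
  funext n
  have hidr := iteratedDeriv_tanh_real n 0
  rw [Complex.ofReal_zero] at hidr
  rw [hidr]
  have hfac : ((n.factorial : ℝ) : ℂ) ≠ 0 := by
    exact_mod_cast Nat.cast_ne_zero.mpr n.factorial_ne_zero
  simp only [tanhCoeff, smul_eq_mul, sub_zero]
  push_cast
  field_simp

end Stmt6Aux

namespace Stmt6Aux

abbrev M3 := Matrix (Fin 3) (Fin 3) ℂ

lemma key (coeff : ℕ → ℝ) (A P : M3) (μ : ℂ)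
    (hP : ∀ n : ℕ, P * A ^ n = μ ^ n • P)
    (hMS : Summable (fun n : ℕ => (coeff n : ℂ) • A ^ n))
    (hS : Summable (fun n : ℕ => (coeff n : ℂ) * μ ^ n)) :
    P * (∑' n : ℕ, (coeff n : ℂ) • A ^ n) = (∑' n : ℕ, (coeff n : ℂ) * μ ^ n) • P := by
  let L : M3 →L[ℂ] M3 := LinearMap.toContinuousLinearMap (LinearMap.mulLeft ℂ P)
  have hL : ∀ N : M3, L N = P * N := fun _ => rfl
  calc P * (∑' n : ℕ, (coeff n : ℂ) • A ^ n) = L (∑' n : ℕ, (coeff n : ℂ) • A ^ n) := rfl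
  _ = ∑' n : ℕ, L ((coeff n : ℂ) • A ^ n) := L.map_tsum hMS
  _ = ∑' n : ℕ, ((coeff n : ℂ) * μ ^ n) • P := by
      congr 1; funext n
      rw [map_smul, hL, hP, smul_smul]
  _ = (∑' n : ℕ, (coeff n : ℂ) * μ ^ n) • P := hS.tsum_smul_const P

end Stmt6Aux

open Stmt6Aux Complex
set_option maxHeartbeats 2000000 in
/-- Spectral action of the two-step matrix `(2/h)tanh(−(h/2)B̂)` and of the
filter `Ψ(−hB̂)` on the eigenprojections `P₀, P₁, P₋₁` of `B̂` for the eigenvalues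
`0, −ib, +ib`: (i) `P₀ (2/h)tanh(−(h/2)B̂) = 0`; (ii) `P_{±1} (2/h)tanh(−(h/2)B̂)
= ±i(2/h)tan(hb/2) P_{±1}`; (iii) `P₀ Ψ(−hB̂) = P₀` and `P_{±1} Ψ(−hB̂) = Ψ(±ihb) P_{±1}`. -/
theorem stmt6 (B : Fin 3 → ℝ) (h : ℝ) (hb : 0 < enorm3 B) (hh : 0 < h)
    (hres : h * enorm3 B < pi)
    (P0 P1 Pm1 : Matrix (Fin 3) (Fin 3) ℂ)
    (hsum : P0 + P1 + Pm1 = 1)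
    (horth0 : P0.IsHermitian) (hidem0 : P0 * P0 = P0)
    (horth1 : P1.IsHermitian) (hidem1 : P1 * P1 = P1)
    (horthm1 : Pm1.IsHermitian) (hidemm1 : Pm1 * Pm1 = Pm1)
    (heig0 : hatC B * P0 = 0)
    (heig1 : hatC B * P1 = (-(Complex.I * (enorm3 B : ℂ))) • P1)
    (heigm1 : hatC B * Pm1 = (Complex.I * (enorm3 B : ℂ)) • Pm1) :
    P0 * ((2 / h : ℂ) • tanhMatC ((-(h / 2) : ℂ) • hatC B)) = 0 ∧
    P1 * ((2 / h : ℂ) • tanhMatC ((-(h / 2) : ℂ) • hatC B)) =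
        (Complex.I * (2 / h) * Real.tan (h * enorm3 B / 2)) • P1 ∧
    Pm1 * ((2 / h : ℂ) • tanhMatC ((-(h / 2) : ℂ) • hatC B)) =
        (-(Complex.I * (2 / h) * Real.tan (h * enorm3 B / 2))) • Pm1 ∧
    P0 * PsiMatC ((-h : ℂ) • hatC B) = P0 ∧
    P1 * PsiMatC ((-h : ℂ) • hatC B) =
        PsiFun (Complex.I * (h * enorm3 B)) • P1 ∧
    Pm1 * PsiMatC ((-h : ℂ) • hatC B) =
        PsiFun (-(Complex.I * (h * enorm3 B))) • Pm1 := by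
  classical
  set b : ℝ := enorm3 B with hbdef
  have hbne : (b : ℂ) ≠ 0 := by exact_mod_cast hb.ne'
  have hhb : 0 < h * b := mul_pos hh hb
  -- conjugate transpose of hatC B
  have hT : (hatC B).conjTranspose = -(hatC B) := by
    ext i j
    fin_cases i <;> fin_cases j <;>
      simp [hatC, Matrix.conjTranspose_apply, Complex.conj_ofReal]
  -- left eigenvector relations
  have hleft : ∀ (P : M3) (μ : ℂ), P.IsHermitian → (starRingEnd ℂ) μ = -μ →
      hatC B * P = μ • P → P * hatC B = μ • P := by
    intro P μ hP hμ hE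
    have h1 := congrArg Matrix.conjTranspose hE
    rw [Matrix.conjTranspose_mul, hP.eq, hT, Matrix.conjTranspose_smul, hP.eq,
      Matrix.mul_neg] at h1
    rw [show (star μ : ℂ) = -μ from hμ, neg_smul] at h1
    exact neg_injective h1
  have hconj1 : (starRingEnd ℂ) (-(Complex.I * (b : ℂ))) = -(-(Complex.I * (b : ℂ))) := by
    simp [Complex.conj_ofReal]
  have hconjm1 : (starRingEnd ℂ) (Complex.I * (b : ℂ)) = -(Complex.I * (b : ℂ)) := by
    simp [Complex.conj_ofReal]
  have hleft0 : P0 * hatC B = (0 : ℂ) • P0 := by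
    refine hleft P0 0 horth0 (by simp) ?_
    rw [heig0]; simp
  have hleft1 : P1 * hatC B = (-(Complex.I * (b : ℂ))) • P1 :=
    hleft P1 _ horth1 hconj1 heig1
  have hleftm1 : Pm1 * hatC B = (Complex.I * (b : ℂ)) • Pm1 :=
    hleft Pm1 _ horthm1 hconjm1 heigm1
  -- powers
  have hpow : ∀ (P : M3) (μ c : ℂ), P * hatC B = μ • P →
      ∀ n : ℕ, P * (c • hatC B) ^ n = (c * μ) ^ n • P := by
    intro P μ c hPB n
    induction n with
    | zero => simp
    | succ n ih =>
      rw [pow_succ, ← mul_assoc, ih, Matrix.smul_mul, Matrix.mul_smul, hPB,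
        smul_smul, smul_smul, pow_succ]
      ring_nf
  -- orthogonality
  have horthog : ∀ (P Q : M3) (μ ν : ℂ), μ ≠ ν →
      P * hatC B = μ • P → hatC B * Q = ν • Q → P * Q = 0 := by
    intro P Q μ ν hμν hPB hBQ
    have e1 : P * (hatC B * Q) = ν • (P * Q) := by rw [hBQ, Matrix.mul_smul]
    have e2 : P * hatC B * Q = μ • (P * Q) := by rw [hPB, Matrix.smul_mul]
    rw [← mul_assoc, e2] at e1
    have : (μ - ν) • (P * Q) = 0 := by rw [sub_smul, e1, sub_self]
    rcases smul_eq_zero.mp this with hc | hc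
    · exact absurd (sub_eq_zero.mp hc) hμν
    · exact hc
  have hIb : -(Complex.I * (b : ℂ)) ≠ Complex.I * (b : ℂ) := by
    intro hcon
    have : (2 : ℂ) * (Complex.I * (b : ℂ)) = 0 := by linear_combination -hcon
    simp [Complex.I_ne_zero, hbne] at this
  have h1m : P1 * Pm1 = 0 := horthog P1 Pm1 _ _ hIb hleft1 heigm1
  have hm1 : Pm1 * P1 = 0 := horthog Pm1 P1 _ _ (Ne.symm hIb) hleftm1 heig1
  -- spectral decomposition of hatC B
  have hBdecomp : hatC B = (-(Complex.I * (b : ℂ))) • P1 + (Complex.I * (b : ℂ)) • Pm1 := by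
    have : hatC B * (P0 + P1 + Pm1) = hatC B := by rw [hsum, mul_one]
    rw [mul_add, mul_add, heig0, heig1, heigm1, zero_add] at this
    exact this.symm
  -- powers of c • hatC B
  have hA1 : ∀ c : ℂ, c • hatC B =
      (c * -(Complex.I * (b : ℂ))) • P1 + (c * (Complex.I * (b : ℂ))) • Pm1 := by
    intro c
    rw [hBdecomp, smul_add, smul_smul, smul_smul]
  have hApow : ∀ (c : ℂ) (n : ℕ), (c • hatC B) ^ (n + 1) =
      (c * -(Complex.I * (b : ℂ))) ^ (n + 1) • P1 +
      (c * (Complex.I * (b : ℂ))) ^ (n + 1) • Pm1 := by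
    intro c n
    induction n with
    | zero => rw [pow_one, pow_one, pow_one]; exact hA1 c
    | succ n ih =>
      rw [pow_succ, ih, hA1 c]
      simp only [Matrix.add_mul, Matrix.mul_add, Matrix.smul_mul, Matrix.mul_smul,
        hidem1, hidemm1, h1m, hm1, smul_smul, smul_zero, add_zero, zero_add]
      module
  -- matrix summability from scalar summability
  have hMatSummable : ∀ (coeff : ℕ → ℝ) (c : ℂ),
      Summable (fun n : ℕ => (coeff n : ℂ) * (c * -(Complex.I * (b : ℂ))) ^ n) →
      Summable (fun n : ℕ => (coeff n : ℂ) * (c * (Complex.I * (b : ℂ))) ^ n) →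
      Summable (fun n : ℕ => (coeff n : ℂ) • (c • hatC B) ^ n) := by
    intro coeff c hs1 hs2
    rw [← summable_nat_add_iff 1]
    have heq : ∀ n : ℕ, (coeff (n + 1) : ℂ) • (c • hatC B) ^ (n + 1) =
        ((coeff (n + 1) : ℂ) * (c * -(Complex.I * (b : ℂ))) ^ (n + 1)) • P1 +
        ((coeff (n + 1) : ℂ) * (c * (Complex.I * (b : ℂ))) ^ (n + 1)) • Pm1 := by
      intro n
      rw [hApow c n, smul_add, smul_smul, smul_smul]
    refine Summable.congr (Summable.add ?_ ?_) fun n => (heq n).symm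
    · exact (((summable_nat_add_iff 1).mpr hs1)).smul_const P1
    · exact (((summable_nat_add_iff 1).mpr hs2)).smul_const Pm1
  -- scalar summability for the tanh series
  have hnormIb : ∀ t : ℝ, ‖(t : ℂ) * (Complex.I * (b : ℂ))‖ = |t| * b := by
    intro t
    rw [norm_mul, norm_mul, Complex.norm_I, one_mul, Complex.norm_real,
      Complex.norm_real, Real.norm_eq_abs, Real.norm_eq_abs, abs_of_pos hb]
  have hx2 : h * b / 2 < pi / 2 := by linarith
  have hsc_tanh : ∀ t : ℝ, |t| * b < pi / 2 →
      HasSum (fun n : ℕ => (tanhCoeff n : ℂ) * ((t : ℂ) * (Complex.I * (b : ℂ))) ^ n)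
        (Complex.tanh ((t : ℂ) * (Complex.I * (b : ℂ)))) := by
    intro t ht
    exact hasSum_tanh (by rw [hnormIb]; exact ht)
  -- common abbreviations
  set z1 : ℂ := ((h * b / 2 : ℝ) : ℂ) * Complex.I with hz1def
  have hz1norm : ‖z1‖ < pi / 2 := by
    rw [hz1def, norm_mul, Complex.norm_I, mul_one, Complex.norm_real, Real.norm_eq_abs,
      abs_of_pos (by positivity)]
    exact hx2
  have hz1neg : ‖-z1‖ < pi / 2 := by rwa [norm_neg]
  have hS1 := hasSum_tanh hz1norm
  have hSm1 := hasSum_tanh hz1neg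
  have hS0 := hasSum_tanh (show ‖(0 : ℂ)‖ < pi / 2 by simpa using Real.pi_div_two_pos)
  -- identification of eigenvalue scalars for the tanh part
  have e1 : (-((h : ℂ) / 2)) * -(Complex.I * (b : ℂ)) = z1 := by
    rw [hz1def]; push_cast; ring
  have e2 : (-((h : ℂ) / 2)) * (Complex.I * (b : ℂ)) = -z1 := by
    rw [hz1def]; push_cast; ring
  -- tanh values
  have htanh1 : Complex.tanh z1 = ((Real.tan (h * b / 2) : ℝ) : ℂ) * Complex.I := by
    rw [hz1def, Complex.tanh_mul_I, Complex.ofReal_tan]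
  have htanhm1 : Complex.tanh (-z1) = -(((Real.tan (h * b / 2) : ℝ) : ℂ) * Complex.I) := by
    rw [Complex.tanh_neg, htanh1]
  -- matrix summability for the tanh series
  have hMS_tanh : Summable (fun n : ℕ => (tanhCoeff n : ℂ) • ((-((h : ℂ) / 2)) • hatC B) ^ n) := by
    refine hMatSummable tanhCoeff _ ?_ ?_
    · simp only [e1]; exact hS1.summable
    · simp only [e2]; exact hSm1.summable
  -- scalar Psi summability
  have hPsiSummable : ∀ w : ℂ, w ≠ 0 → ‖w‖ < pi →
      Summable (fun n : ℕ => (PsiCoeff n : ℂ) * w ^ n) := by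
    intro w hw hwpi
    have hw2 : ‖w / 2‖ < pi / 2 := by
      rw [norm_div, Complex.norm_ofNat]
      linarith
    have h2 : Summable fun n : ℕ => (tanhCoeff n : ℂ) * (w / 2) ^ n :=
      (hasSum_tanh hw2).summable
    have h3 : Summable fun n : ℕ => (tanhCoeff (n + 1) : ℂ) * (w / 2) ^ (n + 1) :=
      (summable_nat_add_iff (f := fun n : ℕ => (tanhCoeff n : ℂ) * (w / 2) ^ n) 1).mpr h2
    refine (h3.mul_right (2 / w)).congr fun n => ?_
    have hPc : (PsiCoeff n : ℂ) = (tanhCoeff (n + 1) : ℂ) / 2 ^ n := by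
      rw [PsiCoeff]; push_cast; ring
    rw [hPc, div_pow]
    field_simp
    ring
  have hwPsi1 : Complex.I * ((h * b : ℝ) : ℂ) ≠ 0 :=
    mul_ne_zero Complex.I_ne_zero (by exact_mod_cast hhb.ne')
  have hwPsinorm : ‖Complex.I * ((h * b : ℝ) : ℂ)‖ < pi := by
    rw [norm_mul, Complex.norm_I, one_mul, Complex.norm_real, Real.norm_eq_abs,
      abs_of_pos hhb]
    exact hres
  have hPsiS1 : Summable (fun n : ℕ => (PsiCoeff n : ℂ) * (Complex.I * ((h * b : ℝ) : ℂ)) ^ n) :=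
    hPsiSummable _ hwPsi1 hwPsinorm
  have hPsiSm1 : Summable
      (fun n : ℕ => (PsiCoeff n : ℂ) * (-(Complex.I * ((h * b : ℝ) : ℂ))) ^ n) :=
    hPsiSummable _ (neg_ne_zero.mpr hwPsi1) (by rwa [norm_neg])
  -- eigenvalue scalars for the Psi part
  have f1 : (-(h : ℂ)) * -(Complex.I * (b : ℂ)) = Complex.I * ((h * b : ℝ) : ℂ) := by
    push_cast; ring
  have f2 : (-(h : ℂ)) * (Complex.I * (b : ℂ)) = -(Complex.I * ((h * b : ℝ) : ℂ)) := by
    push_cast; ring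
  have hMS_Psi : Summable (fun n : ℕ => (PsiCoeff n : ℂ) • ((-(h : ℂ)) • hatC B) ^ n) := by
    refine hMatSummable PsiCoeff _ ?_ ?_
    · simp only [f1]; exact hPsiS1
    · simp only [f2]; exact hPsiSm1
  -- Psi summability at 0
  have hPsiS0 : Summable (fun n : ℕ => (PsiCoeff n : ℂ) * (0 : ℂ) ^ n) := by
    refine summable_of_ne_finset_zero (s := {0}) fun n hn => ?_
    have : n ≠ 0 := by simpa using hn
    simp [zero_pow this]
  -- power relations for each projection
  have hpow0t : ∀ n : ℕ, P0 * ((-((h : ℂ) / 2)) • hatC B) ^ n = (0 : ℂ) ^ n • P0 := by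
    intro n; simpa using hpow P0 0 (-((h : ℂ) / 2)) hleft0 n
  have hpow1t := hpow P1 _ (-((h : ℂ) / 2)) hleft1
  have hpowm1t := hpow Pm1 _ (-((h : ℂ) / 2)) hleftm1
  have hpow0p : ∀ n : ℕ, P0 * ((-(h : ℂ)) • hatC B) ^ n = (0 : ℂ) ^ n • P0 := by
    intro n; simpa using hpow P0 0 (-(h : ℂ)) hleft0 n
  have hpow1p := hpow P1 _ (-(h : ℂ)) hleft1
  have hpowm1p := hpow Pm1 _ (-(h : ℂ)) hleftm1
  -- the six statements
  have hA2 : ((-(h / 2) : ℂ)) = -((h : ℂ) / 2) := by push_cast; ring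
  refine ⟨?_, ?_, ?_, ?_, ?_, ?_⟩
  · -- P0 tanh
    rw [tanhMatC, Matrix.mul_smul, hA2,
      key tanhCoeff _ P0 0 hpow0t hMS_tanh hS0.summable, hS0.tsum_eq, Complex.tanh_zero,
      zero_smul, smul_zero]
  · -- P1 tanh
    rw [tanhMatC, Matrix.mul_smul, hA2,
      key tanhCoeff _ P1 _ hpow1t hMS_tanh (by rw [e1]; exact hS1.summable)]
    have : ∑' n : ℕ, (tanhCoeff n : ℂ) * ((-((h : ℂ) / 2)) * -(Complex.I * (b : ℂ))) ^ n
        = Complex.tanh z1 := by rw [e1]; exact hS1.tsum_eq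
    rw [this, htanh1, smul_smul]
    congr 1
    ring
  · -- Pm1 tanh
    rw [tanhMatC, Matrix.mul_smul, hA2,
      key tanhCoeff _ Pm1 _ hpowm1t hMS_tanh (by rw [e2]; exact hSm1.summable)]
    have : ∑' n : ℕ, (tanhCoeff n : ℂ) * ((-((h : ℂ) / 2)) * (Complex.I * (b : ℂ))) ^ n
        = Complex.tanh (-z1) := by rw [e2]; exact hSm1.tsum_eq
    rw [this, htanhm1, smul_smul]
    congr 1
    ring
  · -- P0 Psi
    rw [PsiMatC, key PsiCoeff _ P0 0 hpow0p hMS_Psi hPsiS0]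
    have htsum0 : ∑' n : ℕ, (PsiCoeff n : ℂ) * (0 : ℂ) ^ n = (PsiCoeff 0 : ℂ) := by
      rw [tsum_eq_single 0 (fun n hn => by simp [zero_pow hn])]
      simp
    have hderiv : deriv Real.tanh 0 = 1 := by
      have h1 := Real.hasDerivAt_sinh 0
      have h2 := Real.hasDerivAt_cosh 0
      have h3 := h1.div h2 (ne_of_gt (Real.cosh_pos 0))
      have h4 : (Real.sinh / Real.cosh) = Real.tanh :=
        funext fun x => (Real.tanh_eq_sinh_div_cosh x).symm
      rw [h4] at h3
      rw [h3.deriv]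
      simp [Real.cosh_zero, Real.sinh_zero]
    have hPsi0 : PsiCoeff 0 = 1 := by
      rw [PsiCoeff, tanhCoeff, iteratedDeriv_one, hderiv]
      simp
    rw [htsum0, hPsi0]
    simp
  · -- P1 Psi
    rw [PsiMatC, key PsiCoeff _ P1 _ hpow1p hMS_Psi (by rw [f1]; exact hPsiS1)]
    rw [PsiFun]
    congr 2
    · funext n
      rw [f1]
      norm_cast
  · -- Pm1 Psi
    rw [PsiMatC, key PsiCoeff _ Pm1 _ hpowm1p hMS_Psi (by rw [f2]; exact hPsiSm1)]
    rw [PsiFun]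
    congr 2
    · funext n
      rw [f2]
      norm_cast
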